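/- arXiv:1006.3692 — 9 statements merged into one kernel-verified Lean document; each statement's English description precedes it below -/
import Mathlib

section
/- For any graph G, the equivalence number of the line graph of G is at most the orientation covering number of G, i.e., eq(L(G)) ≤ σ(G). -/
open SimpleGraph

/-- An orientation of `G`, given as a relation `o` where `o u v` means the
edge `uv` is directed from `u` to `v`: on each edge exactly one direction holds. -/
def IsOrientation {V : Type*} (G : SimpleGraph V) (o : V → V → Prop) : Prop :=
  ∀ u v, G.Adj u v → (o u v ↔ ¬ o v u)

/-- An orientation covering of `G`: a family of orientations such that for every
vertex `v` and edges `vu`, `vw` incident to `v`, some orientation directs both out of `v`. -/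
def IsOrientationCover {V : Type*} (G : SimpleGraph V) {k : ℕ}
    (F : Fin k → (V → V → Prop)) : Prop :=
  (∀ i, IsOrientation G (F i)) ∧
    ∀ v u w, G.Adj v u → G.Adj v w → ∃ i, F i v u ∧ F i v w

/-- The orientation covering number `σ(G)`. -/
noncomputable def orientCoverNum {V : Type*} (G : SimpleGraph V) : ℕ :=
  sInf {k | ∃ F : Fin k → (V → V → Prop), IsOrientationCover G F}

/-- An elbow covering of `G`: a family of orientations such that no path `u,v,w`
is a directed path in every orientation. -/
def IsElbowCover {V : Type*} (G : SimpleGraph V) {k : ℕ}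
    (F : Fin k → (V → V → Prop)) : Prop :=
  (∀ i, IsOrientation G (F i)) ∧
    ∀ u v w, G.Adj u v → G.Adj v w → u ≠ w → ∃ i, ¬ (F i u v ∧ F i v w)

/-- The elbow number `elb(G)`. -/
noncomputable def elbowNum {V : Type*} (G : SimpleGraph V) : ℕ :=
  sInf {k | ∃ F : Fin k → (V → V → Prop), IsElbowCover G F}

/-- A graph is an equivalence graph if it is a disjoint union of cliques,
equivalently its adjacency relation is transitive where defined. -/
def IsEquivalenceGraph {V : Type*} (H : SimpleGraph V) : Prop :=
  ∀ u v w, H.Adj u v → H.Adj v w → u ≠ w → H.Adj u w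

/-- An equivalence covering of `G`: equivalence subgraphs covering all edges. -/
def IsEquivCover {V : Type*} (G : SimpleGraph V) {k : ℕ}
    (F : Fin k → SimpleGraph V) : Prop :=
  (∀ i, F i ≤ G ∧ IsEquivalenceGraph (F i)) ∧
    ∀ u v, G.Adj u v → ∃ i, (F i).Adj u v

/-- The equivalence number `eq(G)`. -/
noncomputable def equivNum {V : Type*} (G : SimpleGraph V) : ℕ :=
  sInf {k | ∃ F : Fin k → SimpleGraph V, IsEquivCover G F}

/-- From an orientation, an equivalence subgraph of the line graph. -/
def orientGraph {V : Type*} (G : SimpleGraph V) (o : V → V → Prop) : SimpleGraph G.edgeSet where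
  Adj e f := e ≠ f ∧ ∃ x y z : V, (e : Sym2 V) = s(x,y) ∧ (f : Sym2 V) = s(x,z) ∧ o x y ∧ o x z
  symm := by
    refine ⟨?_⟩
    rintro e f ⟨hne, x, y, z, he, hf, hy, hz⟩
    exact ⟨hne.symm, x, z, y, hf, he, hz, hy⟩

lemma forward {V : Type*} (G : SimpleGraph V) {k : ℕ} (F : Fin k → (V → V → Prop))
    (hF : IsOrientationCover G F) :
    IsEquivCover G.lineGraph (fun i => orientGraph G (F i)) := by
  obtain ⟨hor, hcov⟩ := hF
  constructor
  · intro i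
    constructor
    · rintro e f ⟨hne, x, y, z, he, hf, -, -⟩
      exact ⟨hne, x, by simp [he, hf]⟩
    · rintro e f g ⟨hef, x, y, z, he, hf, hxy, hxz⟩ ⟨hfg, x', y', z', hf', hg, hxy', hxz'⟩ hne
      have hf2 : s(x, z) = s(x', y') := by rw [← hf, hf']
      rw [Sym2.eq_iff] at hf2
      rcases hf2 with ⟨rfl, rfl⟩ | ⟨rfl, rfl⟩
      · exact ⟨hne, x, y, z', he, hg, hxy, hxz'⟩
      · exfalso
        have hadj : G.Adj x z := G.mem_edgeSet.1 (by rw [← hf]; exact f.2)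
        exact ((hor i x z hadj).1 hxz) hxy'
  · intro e f hef
    rw [lineGraph_adj_iff_exists] at hef
    obtain ⟨hne, x, hxe, hxf⟩ := hef
    obtain ⟨y, hy⟩ : ∃ y, (e : Sym2 V) = s(x,y) := ⟨Sym2.Mem.other hxe, (Sym2.other_spec hxe).symm⟩
    obtain ⟨z, hz⟩ : ∃ z, (f : Sym2 V) = s(x,z) := ⟨Sym2.Mem.other hxf, (Sym2.other_spec hxf).symm⟩
    have hxy : G.Adj x y := G.mem_edgeSet.1 (by rw [← hy]; exact e.2)
    have hxz : G.Adj x z := G.mem_edgeSet.1 (by rw [← hz]; exact f.2)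
    obtain ⟨i, h1, h2⟩ := hcov x y z hxy hxz
    exact ⟨i, hne, x, y, z, hy, hz, h1, h2⟩

section
attribute [local instance] Classical.propDecidable
variable {V : Type*} [LinearOrder V] {G : SimpleGraph V}

def mnS (x y z : V) : V := min x (min y z)
def mdS (x y z : V) : V := min (max x y) (min (max y z) (max x z))
def mxS (x y z : V) : V := max x (max y z)
def statS (j : Fin 3) (x y z : V) : V :=
  if j = 0 then mnS x y z else if j = 1 then mdS x y z else mxS x y z

lemma statS_swap23 (j : Fin 3) (x y z : V) : statS j x y z = statS j x z y := by
  unfold statS mnS mdS mxS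
  split_ifs <;> simp [min_comm, min_assoc, min_left_comm, max_comm, max_assoc, max_left_comm]

lemma statS_surj (x y z : V) : ∃ j : Fin 3, statS j x y z = x := by
  rcases le_total x y with h1 | h1 <;> rcases le_total x z with h2 | h2
  · exact ⟨0, by simp [statS, mnS, min_eq_left, h1, h2, le_min h1 h2]⟩
  · refine ⟨1, ?_⟩
    simp only [statS, mdS]
    norm_num
    rw [max_eq_right h1, max_eq_left (h2.trans h1), max_eq_left h2, min_eq_right h1,
      min_eq_right h1]
  · refine ⟨1, ?_⟩
    simp only [statS, mdS]
    norm_num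
    rw [max_eq_left h1, max_eq_right (h1.trans h2), max_eq_right h2, min_self,
      min_eq_left h2]
  · exact ⟨2, by simp [statS, mxS, max_eq_left, max_le h1 h2]⟩

/-- `e` has an `H`-neighbour through the vertex `v`. -/
def nbrThru (H : SimpleGraph G.edgeSet) (e : G.edgeSet) (v : V) : Prop :=
  ∃ f, H.Adj e f ∧ v ∈ (f : Sym2 V)

/-- Vertices outside `e` seen by `H`-neighbours of `e`. -/
def outerSet (H : SimpleGraph G.edgeSet) (e : G.edgeSet) : Set V :=
  {a | a ∉ (e : Sym2 V) ∧ ∃ f, H.Adj e f ∧ a ∈ (f : Sym2 V)}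

noncomputable def thirdV [Nonempty V] (H : SimpleGraph G.edgeSet) (e : G.edgeSet) : V :=
  Classical.epsilon (· ∈ outerSet H e)

def srcP (s u v : V) : Prop := s = u ∨ (s ≠ u ∧ s ≠ v ∧ u < v)

lemma lt_iff_not_lt' {u v : V} (h : u ≠ v) : u < v ↔ ¬ v < u :=
  ⟨fun a b => asymm a b, fun a => (h.lt_or_gt).resolve_right a⟩

lemma srcP_compl {s u v : V} (h : u ≠ v) : srcP s u v ↔ ¬ srcP s v u := by
  unfold srcP
  by_cases h1 : s = u
  · subst h1; simp [h, Ne.symm h]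
  · by_cases h2 : s = v
    · subst h2; simp [h1, Ne.symm h]
    · simp only [h1, h2, false_or, ne_eq, not_false_eq_true, true_and, not_or]
      rw [lt_iff_not_lt' h]

noncomputable def coreO [Nonempty V] (H : SimpleGraph G.edgeSet) (j : Fin 3)
    (e : G.edgeSet) (u v : V) : Prop :=
  if nbrThru H e u ∧ ¬ nbrThru H e v then True
  else if nbrThru H e v ∧ ¬ nbrThru H e u then False
  else if nbrThru H e u ∧ nbrThru H e v then srcP (statS j u v (thirdV H e)) u v
  else u < v

lemma coreO_branch3 [Nonempty V] (H : SimpleGraph G.edgeSet) (j : Fin 3)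
    (e : G.edgeSet) {u v : V} (hu : nbrThru H e u) (hv : nbrThru H e v) :
    coreO H j e u v = srcP (statS j u v (thirdV H e)) u v := by
  simp only [coreO]
  rw [if_neg (by tauto), if_neg (by tauto), if_pos ⟨hu, hv⟩]

lemma coreO_branch1 [Nonempty V] (H : SimpleGraph G.edgeSet) (j : Fin 3)
    (e : G.edgeSet) {u v : V} (hu : nbrThru H e u) (hv : ¬ nbrThru H e v) :
    coreO H j e u v = True := by
  simp only [coreO]
  rw [if_pos ⟨hu, hv⟩]

lemma coreO_branch2 [Nonempty V] (H : SimpleGraph G.edgeSet) (j : Fin 3)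
    (e : G.edgeSet) {u v : V} (hu : ¬ nbrThru H e u) (hv : nbrThru H e v) :
    coreO H j e u v = False := by
  simp only [coreO]
  rw [if_neg (by tauto), if_pos ⟨hv, hu⟩]

lemma coreO_branch4 [Nonempty V] (H : SimpleGraph G.edgeSet) (j : Fin 3)
    (e : G.edgeSet) {u v : V} (hu : ¬ nbrThru H e u) (hv : ¬ nbrThru H e v) :
    coreO H j e u v = (u < v) := by
  simp only [coreO]
  rw [if_neg (by tauto), if_neg (by tauto), if_neg (by tauto)]

lemma coreO_compl [Nonempty V] (H : SimpleGraph G.edgeSet) (j : Fin 3)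
    (e : G.edgeSet) {u v : V} (h : u ≠ v) : coreO H j e u v ↔ ¬ coreO H j e v u := by
  have hst : statS j u v (thirdV H e) = statS j v u (thirdV H e) := by
    unfold statS mnS mdS mxS
    split_ifs <;> simp [min_comm, min_assoc, min_left_comm, max_comm, max_assoc, max_left_comm]
  by_cases hu : nbrThru H e u <;> by_cases hv : nbrThru H e v
  · rw [coreO_branch3 H j e hu hv, coreO_branch3 H j e hv hu, hst]
    exact srcP_compl h
  · rw [coreO_branch1 H j e hu hv, coreO_branch2 H j e hv hu]
    simp
  · rw [coreO_branch2 H j e hu hv, coreO_branch1 H j e hv hu]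
    simp
  · rw [coreO_branch4 H j e hu hv, coreO_branch4 H j e hv hu]
    exact lt_iff_not_lt' h

/-- The `j`-th orientation associated to an equivalence subgraph `H` of the line graph. -/
noncomputable def ruleO [Nonempty V] (G : SimpleGraph V) (H : SimpleGraph G.edgeSet) (j : Fin 3)
    (u v : V) : Prop :=
  if h : G.Adj u v then coreO H j ⟨s(u,v), G.mem_edgeSet.2 h⟩ u v else u < v

lemma ruleO_orient [Nonempty V] (H : SimpleGraph G.edgeSet) (j : Fin 3) :
    IsOrientation G (ruleO G H j) := by
  intro u v h
  have h' := h.symm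
  have hee : (⟨s(v,u), G.mem_edgeSet.2 h'⟩ : G.edgeSet) = ⟨s(u,v), G.mem_edgeSet.2 h⟩ :=
    Subtype.ext (Sym2.eq_swap)
  rw [ruleO, ruleO, dif_pos h, dif_pos h', hee]
  exact coreO_compl H j _ h.ne

lemma lt_orient : IsOrientation G (fun u v : V => u < v) := by
  intro u v h
  constructor
  · exact fun h1 h2 => asymm h1 h2
  · intro h1; rcases lt_or_gt_of_ne h.ne with hh | hh
    · exact hh
    · exact absurd hh h1

lemma gt_orient : IsOrientation G (fun u v : V => v < u) := by
  intro u v h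
  constructor
  · exact fun h1 h2 => asymm h1 h2
  · intro h1; rcases lt_or_gt_of_ne h.symm.ne with hh | hh
    · exact hh
    · exact absurd hh h1
section tri
variable [Nonempty V] {H : SimpleGraph G.edgeSet}

lemma tri_main (hH : H ≤ G.lineGraph) (heq : IsEquivalenceGraph H)
    {v u w : V} (hvu : G.Adj v u) (hvw : G.Adj v w) (hne : u ≠ w)
    (hef : H.Adj ⟨s(v,u), G.mem_edgeSet.2 hvu⟩ ⟨s(v,w), G.mem_edgeSet.2 hvw⟩)
    (hPu : nbrThru H ⟨s(v,u), G.mem_edgeSet.2 hvu⟩ u) :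
    outerSet H ⟨s(v,u), G.mem_edgeSet.2 hvu⟩ = {w} ∧
      nbrThru H ⟨s(v,w), G.mem_edgeSet.2 hvw⟩ w := by
  set e : G.edgeSet := ⟨s(v,u), G.mem_edgeSet.2 hvu⟩ with he_def
  set f : G.edgeSet := ⟨s(v,w), G.mem_edgeSet.2 hvw⟩ with hf_def
  obtain ⟨g, hEg, hug⟩ := hPu
  have hvne : v ≠ u := hvu.ne
  have hvnw : v ≠ w := hvw.ne
  have hvg : v ∉ (g : Sym2 V) := by
    intro hv
    have hgs : (g : Sym2 V) = s(v,u) := (Sym2.mem_and_mem_iff hvne).1 ⟨hv, hug⟩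
    exact H.ne_of_adj hEg (Subtype.ext hgs.symm)
  have hgf : g ≠ f := by
    intro h; rw [h] at hvg; exact hvg (by simp [hf_def])
  have hAgf : H.Adj g f := heq g e f hEg.symm hef hgf
  have hwg : w ∈ (g : Sym2 V) := by
    obtain ⟨-, c, hcg, hcf⟩ := lineGraph_adj_iff_exists.1 (hH hAgf)
    rcases Sym2.mem_iff.1 hcf with rfl | rfl
    · exact absurd hcg hvg
    · exact hcg
  have hgs : (g : Sym2 V) = s(u,w) := (Sym2.mem_and_mem_iff hne).1 ⟨hug, hwg⟩
  refine ⟨?_, ⟨g, hAgf.symm, hwg⟩⟩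
  ext b
  simp only [Set.mem_singleton_iff]
  constructor
  · rintro ⟨hbe, h, hEh, hbh⟩
    have hbv : b ≠ v := by rintro rfl; exact hbe (by simp [he_def])
    have hbu : b ≠ u := by rintro rfl; exact hbe (by simp [he_def])
    obtain ⟨-, c, hce, hch⟩ := lineGraph_adj_iff_exists.1 (hH hEh)
    have hce' : c = v ∨ c = u := by
      have : c ∈ s(v,u) := by rw [he_def] at hce; exact hce
      exact Sym2.mem_iff.1 this
    rcases hce' with rfl | rfl
    · -- h contains v and b : h = s(v,b)
      have hhs : (h : Sym2 V) = s(c, b) := (Sym2.mem_and_mem_iff (Ne.symm hbv)).1 ⟨hch, hbh⟩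
      have hhg : h ≠ g := by
        intro h'; rw [h'] at hch; exact hvg hch
      have hAhg : H.Adj h g := heq h e g hEh.symm hEg hhg
      obtain ⟨-, d, hdh, hdg⟩ := lineGraph_adj_iff_exists.1 (hH hAhg)
      rw [hhs] at hdh; rw [hgs] at hdg
      rcases Sym2.mem_iff.1 hdh with rfl | rfl
      · rcases Sym2.mem_iff.1 hdg with rfl | rfl
        · exact absurd rfl hvne
        · exact absurd rfl hvnw
      · rcases Sym2.mem_iff.1 hdg with rfl | rfl
        · exact absurd rfl hbu
        · rfl
    · -- h contains u and b : h = s(u,b)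
      have hhs : (h : Sym2 V) = s(c, b) := (Sym2.mem_and_mem_iff (Ne.symm hbu)).1 ⟨hch, hbh⟩
      have hhf : h ≠ f := by
        intro h'
        rw [h'] at hch
        have : c = v ∨ c = w := Sym2.mem_iff.1 (by rw [hf_def] at hch; exact hch)
        rcases this with rfl | rfl
        · exact hvne rfl
        · exact hne rfl
      have hAhf : H.Adj h f := heq h e f hEh.symm hef hhf
      obtain ⟨-, d, hdh, hdf⟩ := lineGraph_adj_iff_exists.1 (hH hAhf)
      rw [hhs] at hdh
      have hdf' : d = v ∨ d = w := Sym2.mem_iff.1 (by rw [hf_def] at hdf; exact hdf)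
      rcases Sym2.mem_iff.1 hdh with rfl | rfl
      · rcases hdf' with rfl | rfl
        · exact absurd rfl (Ne.symm hvne)
        · exact absurd rfl hne
      · rcases hdf' with rfl | rfl
        · exact absurd rfl hbv
        · rfl
  · rintro rfl
    refine ⟨?_, g, hEg, hwg⟩
    rw [he_def]
    simp only [Sym2.mem_iff, not_or]
    exact ⟨Ne.symm hvnw, Ne.symm hne⟩

lemma ruleO_cover (hH : H ≤ G.lineGraph) (heq : IsEquivalenceGraph H)
    {v u w : V} (hvu : G.Adj v u) (hvw : G.Adj v w) (hne : u ≠ w)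
    (hef : H.Adj ⟨s(v,u), G.mem_edgeSet.2 hvu⟩ ⟨s(v,w), G.mem_edgeSet.2 hvw⟩) :
    ∃ j : Fin 3, ruleO G H j v u ∧ ruleO G H j v w := by
  set e : G.edgeSet := ⟨s(v,u), G.mem_edgeSet.2 hvu⟩ with he_def
  set f : G.edgeSet := ⟨s(v,w), G.mem_edgeSet.2 hvw⟩ with hf_def
  have hPev : nbrThru H e v := ⟨f, hef, by simp [hf_def]⟩
  have hPfv : nbrThru H f v := ⟨e, hef.symm, by simp [he_def]⟩
  have hr1 : ∀ j, ruleO G H j v u = coreO H j e v u := fun j => by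
    rw [ruleO, dif_pos hvu]
  have hr2 : ∀ j, ruleO G H j v w = coreO H j f v w := fun j => by
    rw [ruleO, dif_pos hvw]
  by_cases hPeu : nbrThru H e u
  · obtain ⟨hAe, hPfw⟩ := tri_main hH heq hvu hvw hne hef hPeu
    obtain ⟨hAf, -⟩ := tri_main hH heq hvw hvu (Ne.symm hne) hef.symm hPfw
    have hte : thirdV H e = w := by
      have hex : ∃ a, a ∈ outerSet H e := ⟨w, by rw [hAe]; rfl⟩
      have h3 : thirdV H e ∈ ({w} : Set V) := by
        rw [← hAe]; exact Classical.epsilon_spec hex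
      exact h3
    have htf : thirdV H f = u := by
      have hex : ∃ a, a ∈ outerSet H f := ⟨u, by rw [hAf]; rfl⟩
      have h3 : thirdV H f ∈ ({u} : Set V) := by
        rw [← hAf]; exact Classical.epsilon_spec hex
      exact h3
    obtain ⟨j, hj⟩ := statS_surj v u w
    refine ⟨j, ?_, ?_⟩
    · rw [hr1 j, coreO_branch3 H j e hPev hPeu, hte]
      exact Or.inl hj
    · rw [hr2 j, coreO_branch3 H j f hPfv hPfw, htf]
      refine Or.inl ?_
      rw [statS_swap23]
      exact hj
  · by_cases hPfw : nbrThru H f w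
    · obtain ⟨-, hPeu'⟩ := tri_main hH heq hvw hvu (Ne.symm hne) hef.symm hPfw
      exact absurd hPeu' hPeu
    · refine ⟨0, ?_, ?_⟩
      · rw [hr1 0, coreO_branch1 H 0 e hPev hPeu]; trivial
      · rw [hr2 0, coreO_branch1 H 0 f hPfv hPfw]; trivial
end tri
end


lemma backward {V : Type*} [Nonempty V] (G : SimpleGraph V) {k : ℕ}
    (F : Fin k → SimpleGraph G.edgeSet) (hF : IsEquivCover G.lineGraph F) :
    ∃ m, ∃ O : Fin m → (V → V → Prop), IsOrientationCover G O := by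
  letI : LinearOrder V := IsWellOrder.linearOrder WellOrderingRel
  refine ⟨3*k+2, fun i =>
    if h3 : (i : ℕ) < 3*k then
      ruleO G (F ⟨(i:ℕ)/3, by rw [Nat.div_lt_iff_lt_mul (by norm_num)]; omega⟩)
        ⟨(i:ℕ)%3, Nat.mod_lt _ (by norm_num)⟩
    else if (i:ℕ) = 3*k then (fun u v => u < v) else (fun u v => v < u), ?_, ?_⟩
  · intro i
    dsimp only
    split_ifs with h3 h2
    · exact ruleO_orient _ _
    · exact lt_orient
    · exact gt_orient
  · intro v u w hvu hvw
    by_cases huw : u = w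
    · subst huw
      rcases lt_or_gt_of_ne hvu.ne with hlt | hlt
      · refine ⟨⟨3*k, by omega⟩, ?_⟩
        simp only [dif_neg (show ¬ ((⟨3*k, by omega⟩ : Fin (3*k+2)) : ℕ) < 3*k by simp),
          if_pos (show ((⟨3*k, by omega⟩ : Fin (3*k+2)) : ℕ) = 3*k from rfl)]
        exact ⟨hlt, hlt⟩
      · refine ⟨⟨3*k+1, by omega⟩, ?_⟩
        simp only [dif_neg (show ¬ ((⟨3*k+1, by omega⟩ : Fin (3*k+2)) : ℕ) < 3*k by simp),
          if_neg (show ¬ ((⟨3*k+1, by omega⟩ : Fin (3*k+2)) : ℕ) = 3*k by simp)]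
        exact ⟨hlt, hlt⟩
    · have hlg : G.lineGraph.Adj ⟨s(v,u), G.mem_edgeSet.2 hvu⟩ ⟨s(v,w), G.mem_edgeSet.2 hvw⟩ := by
        rw [lineGraph_adj_iff_exists]
        refine ⟨?_, v, by simp, by simp⟩
        intro hcon
        have : s(v,u) = s(v,w) := congrArg Subtype.val hcon
        rw [Sym2.eq_iff] at this
        rcases this with ⟨-, h⟩ | ⟨h1, h2⟩
        · exact huw h
        · exact hvu.ne h2.symm
      obtain ⟨i0, hadj⟩ := hF.2 _ _ hlg
      obtain ⟨j, hj1, hj2⟩ := ruleO_cover (hF.1 i0).1 (hF.1 i0).2 hvu hvw huw hadj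
      have hlt : 3*(i0:ℕ)+(j:ℕ) < 3*k+2 := by
        have := i0.isLt; have := j.isLt; omega
      refine ⟨⟨3*(i0:ℕ)+(j:ℕ), hlt⟩, ?_⟩
      have h3 : ((⟨3*(i0:ℕ)+(j:ℕ), hlt⟩ : Fin (3*k+2)) : ℕ) < 3*k := by
        have := i0.isLt; have := j.isLt; simp; omega
      simp only [dif_pos h3]
      have hdiv : ∀ (hh : ((⟨3*(i0:ℕ)+(j:ℕ), hlt⟩ : Fin (3*k+2)) : ℕ)/3 < k),
          (⟨((⟨3*(i0:ℕ)+(j:ℕ), hlt⟩ : Fin (3*k+2)) : ℕ)/3, hh⟩ : Fin k) = i0 := by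
        intro hh
        apply Fin.ext
        show (3*(i0:ℕ)+(j:ℕ))/3 = (i0:ℕ)
        rw [Nat.mul_add_div (by norm_num), Nat.div_eq_of_lt j.isLt]
        omega
      have hmod : ∀ (hh : ((⟨3*(i0:ℕ)+(j:ℕ), hlt⟩ : Fin (3*k+2)) : ℕ)%3 < 3),
          (⟨((⟨3*(i0:ℕ)+(j:ℕ), hlt⟩ : Fin (3*k+2)) : ℕ)%3, hh⟩ : Fin 3) = j := by
        intro hh
        apply Fin.ext
        show (3*(i0:ℕ)+(j:ℕ))%3 = (j:ℕ)
        rw [Nat.mul_add_mod, Nat.mod_eq_of_lt j.isLt]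
      rw [hdiv, hmod]
      exact ⟨hj1, hj2⟩

/-- for any graph `G`, `eq(L(G)) ≤ σ(G)`. -/
theorem stmt0 {V : Type*} (G : SimpleGraph V) :
    equivNum G.lineGraph ≤ orientCoverNum G := by
  classical
  set S := {k | ∃ F : Fin k → (V → V → Prop), IsOrientationCover G F} with hS
  rcases S.eq_empty_or_nonempty with hemp | hne
  · have h0 : orientCoverNum G = 0 := by
      rw [orientCoverNum, ← hS, hemp, Nat.sInf_empty]
    rw [h0, Nat.le_zero, equivNum, Nat.sInf_eq_zero]
    right
    rw [Set.eq_empty_iff_forall_notMem]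
    rintro k ⟨F, hFc⟩
    cases isEmpty_or_nonempty V with
    | inl h =>
      have h0S : 0 ∈ S := by
        refine ⟨fun _ _ _ => False, fun i => i.elim0, fun v u w _ _ => (IsEmpty.false v).elim⟩
      rw [hemp] at h0S
      exact h0S
    | inr h =>
      obtain ⟨m, O, hO⟩ := backward G F hFc
      have hmS : m ∈ S := ⟨O, hO⟩
      rw [hemp] at hmS
      exact hmS
  · have hmem : orientCoverNum G ∈ S := by
      rw [orientCoverNum, ← hS]; exact Nat.sInf_mem hne
    obtain ⟨F, hFc⟩ := hmem
    exact Nat.sInf_le ⟨_, forward G F hFc⟩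
end

section
/- For any graph G with chromatic number k, σ(G) ≤ σ(K_k), where K_k is the complete graph on k vertices. -/
open SimpleGraph

/-- if `χ(G) = k`, then `σ(G) ≤ σ(K_k)`. -/
theorem stmt5 {V : Type*} [Fintype V] (G : SimpleGraph V) (k : ℕ)
    (hk : G.chromaticNumber = k) :
    orientCoverNum G ≤ orientCoverNum (⊤ : SimpleGraph (Fin k)) := by
  have hcol : G.Colorable k := by
    rw [← SimpleGraph.chromaticNumber_le_iff_colorable, hk]
  obtain ⟨C⟩ := hcol
  apply csInf_le_csInf
  · exact ⟨0, fun n _ => Nat.zero_le n⟩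
  · refine ⟨k, fun i u v => (if u = i then True else if v = i then False
      else (u : ℕ) < v), ?_, ?_⟩
    · intro i u v huv
      have hne : u ≠ v := huv.ne
      rcases eq_or_ne u i with hu | hu <;> rcases eq_or_ne v i with hv | hv <;>
        simp_all <;> omega
    · intro v u w hvu hvw
      refine ⟨v, ?_, ?_⟩ <;> simp_all
  · rintro m ⟨F, hF1, hF2⟩
    refine ⟨fun i u v => F i (C u) (C v), fun i u v huv => ?_, fun v u w hvu hvw => ?_⟩
    · exact hF1 i (C u) (C v) (C.valid huv)
    · exact hF2 (C v) (C u) (C w) (C.valid hvu) (C.valid hvw)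
end

section
/- elb(K_4) = 2: the complete graph on 4 vertices admits an elbow covering of size 2, and has no elbow covering of size 1. -/
open SimpleGraph

lemma cover2 : ∃ F : Fin 2 → (Fin 4 → Fin 4 → Prop),
    IsElbowCover (⊤ : SimpleGraph (Fin 4)) F := by
  refine ⟨fun i u v => if i = 0 then u < v else v < u, ?_, ?_⟩
  · intro i u v huv
    rw [top_adj] at huv
    have huv' : (u : ℕ) ≠ (v : ℕ) := Fin.val_ne_of_ne huv
    by_cases hi : i = 0
    · simp only [if_pos hi]
      constructor <;> intro h <;> omega
    · simp only [if_neg hi]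
      constructor <;> intro h <;> omega
  · intro u v w huv hvw hne
    by_cases h : u < v
    · refine ⟨1, ?_⟩
      intro ⟨h1, h2⟩
      rw [show ((fun i u v => if i = (0:Fin 2) then u < v else v < u) 1 u v) = (v < u) from
        if_neg (by decide)] at h1
      omega
    · refine ⟨0, ?_⟩
      intro ⟨h1, h2⟩
      rw [show ((fun i u v => if i = (0:Fin 2) then u < v else v < u) 0 u v) = (u < v) from
        if_pos rfl] at h1
      omega

lemma no1 : ¬ ∃ F : Fin 1 → (Fin 4 → Fin 4 → Prop),
    IsElbowCover (⊤ : SimpleGraph (Fin 4)) F := by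
  rintro ⟨F, hor, hcov⟩
  set o := F 0 with ho
  have key : ∀ u v w : Fin 4, u ≠ v → v ≠ w → u ≠ w → ¬ (o u v ∧ o v w) := by
    intro u v w h1 h2 h3
    obtain ⟨i, hi⟩ := hcov u v w ((top_adj _ _).2 h1) ((top_adj _ _).2 h2) h3
    rwa [Subsingleton.elim i 0] at hi
  have hon : ∀ u v : Fin 4, u ≠ v → (o u v ↔ ¬ o v u) := fun u v h => hor 0 u v ((top_adj _ _).2 h)
  by_cases h01 : o 0 1
  · have h21 : o 2 1 := by
      have := key 0 1 2 (by decide) (by decide) (by decide)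
      have h12 : ¬ o 1 2 := fun h => this ⟨h01, h⟩
      exact (hon 2 1 (by decide)).2 (fun h => h12 ((hon 1 2 (by decide)).2
        (fun h' => ((hon 2 1 (by decide)).1 h') h)))
    have h20 : o 2 0 := by
      have := key 0 2 1 (by decide) (by decide) (by decide)
      have h02 : ¬ o 0 2 := fun h => this ⟨h, h21⟩
      exact ((hon 0 2 (by decide)).not_left).1 h02
    exact key 2 0 1 (by decide) (by decide) (by decide) ⟨h20, h01⟩
  · have h10 : o 1 0 := ((hon 0 1 (by decide)).not_left).1 h01
    have h12 : o 1 2 := by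
      have := key 2 1 0 (by decide) (by decide) (by decide)
      have h21 : ¬ o 2 1 := fun h => this ⟨h, h10⟩
      exact ((hon 2 1 (by decide)).not_left).1 h21
    have h02 : o 0 2 := by
      have := key 1 2 0 (by decide) (by decide) (by decide)
      have h20 : ¬ o 2 0 := fun h => this ⟨h12, h⟩
      exact ((hon 2 0 (by decide)).not_left).1 h20
    exact key 1 0 2 (by decide) (by decide) (by decide) ⟨h10, h02⟩

/-- `elb(K_4) = 2`: there is an elbow covering of `K_4` of size 2,
and none of size 1. -/
theorem stmt9 :
    elbowNum (⊤ : SimpleGraph (Fin 4)) = 2 ∧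
    (∃ F : Fin 2 → (Fin 4 → Fin 4 → Prop), IsElbowCover (⊤ : SimpleGraph (Fin 4)) F) ∧
    ¬ ∃ F : Fin 1 → (Fin 4 → Fin 4 → Prop), IsElbowCover (⊤ : SimpleGraph (Fin 4)) F := by
  obtain ⟨F2, hF2⟩ := cover2
  refine ⟨?_, ⟨F2, hF2⟩, no1⟩
  have hmem : (2 : ℕ) ∈ {k | ∃ F : Fin k → (Fin 4 → Fin 4 → Prop),
      IsElbowCover (⊤ : SimpleGraph (Fin 4)) F} := ⟨F2, hF2⟩
  apply le_antisymm (Nat.sInf_le hmem)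
  by_contra h
  push_neg at h
  have hin := Nat.sInf_mem ⟨2, hmem⟩
  interval_cases hi : sInf {k | ∃ F : Fin k → (Fin 4 → Fin 4 → Prop),
      IsElbowCover (⊤ : SimpleGraph (Fin 4)) F}
  · obtain ⟨F, _, hc⟩ := hin
    obtain ⟨i, _⟩ := hc 0 1 2 ((top_adj _ _).2 (by decide)) ((top_adj _ _).2 (by decide)) (by decide)
    exact i.elim0
  · exact no1 hin
end

section
/- Every bipartite graph with at least one edge has orientation covering number at most 2 (and exactly 2 if it has an edge). -/
open SimpleGraph

/-- every bipartite graph with at least one edge has orientation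
covering number exactly 2. -/
theorem stmt12 {V : Type*} (G : SimpleGraph V) (hbip : G.Colorable 2)
    (hedge : G.edgeSet.Nonempty) :
    orientCoverNum G = 2 := by

  obtain ⟨C⟩ := hbip
  obtain ⟨e, he⟩ := hedge
  induction e using Sym2.ind with
  | _ a b =>
  rw [SimpleGraph.mem_edgeSet] at he
  have h2 : (2 : ℕ) ∈ {k | ∃ F : Fin k → (V → V → Prop), IsOrientationCover G F} := by
    refine ⟨![fun u _ => C u = 0, fun u _ => C u = 1], ?_, ?_⟩
    · intro i u v huv
      have hne : C u ≠ C v := C.valid huv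
      fin_cases i <;> simp <;> omega
    · intro v u w hvu hvw
      rcases (by omega : C v = 0 ∨ C v = 1) with h | h
      · exact ⟨0, by simp [h], by simp [h]⟩
      · exact ⟨1, by simp [h], by simp [h]⟩
  apply le_antisymm (Nat.sInf_le h2)
  apply le_csInf ⟨2, h2⟩
  rintro k ⟨F, hF1, hF2⟩
  by_contra hk
  interval_cases k
  · obtain ⟨i, _⟩ := hF2 a b b he he
    exact i.elim0
  · obtain ⟨i, h1, h2'⟩ := hF2 a b b he he
    obtain ⟨j, h3, h4⟩ := hF2 b a a he.symm he.symm
    exact ((hF1 i a b he).mp h1) (by have := Subsingleton.elim i j; subst this; exact h3)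
end

section
/- For any graph G with χ(G) ≥ 2, ⌈log₂ log₂ χ(G)⌉ + 1 ≤ σ(G) ≤ 2⌈log₂ log₂ χ(G)⌉ + 2. -/
open SimpleGraph

/-! ### Auxiliary lemmas on bits and booleans -/

lemma aux_testBit_log_self {x : ℕ} (hx : x ≠ 0) : x.testBit (Nat.log 2 x) = true := by
  have h1 : 2 ^ Nat.log 2 x ≤ x := Nat.pow_log_le_self 2 hx
  have h2 : x < 2 ^ (Nat.log 2 x + 1) := Nat.lt_pow_succ_log_self one_lt_two x
  have hd : x / 2 ^ Nat.log 2 x = 1 := by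
    refine Nat.div_eq_of_lt_le (by simpa using h1) ?_
    rw [pow_succ] at h2; omega
  rw [Nat.testBit_eq_decide_div_mod_eq, hd]
  simp

lemma aux_bit_ne {x y : ℕ} (h : x ≠ y) :
    x.testBit (Nat.log 2 (x ^^^ y)) ≠ y.testBit (Nat.log 2 (x ^^^ y)) := by
  have hx : x ^^^ y ≠ 0 := fun h0 => h (Nat.eq_of_testBit_eq fun i => by simpa [Nat.testBit_xor] using congrArg (Nat.testBit · i) h0)
  have ht := aux_testBit_log_self hx
  rw [Nat.testBit_xor] at ht
  intro hc
  rw [hc] at ht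
  simp at ht

lemma bool1 {x y b : Bool} (h : x ≠ y) : (y = b) ↔ ¬(x = b) := by
  cases x <;> cases y <;> cases b <;> simp_all

lemma bool2 {a b x y : Bool} (h : x ≠ y) :
    ((a = b) ↔ (x = false)) ↔ ¬((a = b) ↔ (y = false)) := by
  cases a <;> cases b <;> cases x <;> cases y <;> simp_all

lemma bool3 {x y : Bool} (h : x ≠ y) : y = !x := by
  cases x <;> cases y <;> simp_all

/-! ### The upper-bound construction -/

def bitIdx {V : Type*} (c : V → ℕ) (u v : V) : ℕ := Nat.log 2 (c u ^^^ c v)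

def Por {V : Type*} (c : V → ℕ) (b : Bool) (u v : V) : Prop :=
  (c v).testBit (bitIdx c u v) = b

def Qor {V : Type*} (c : V → ℕ) (l : ℕ) (b : Bool) (u v : V) : Prop :=
  ((bitIdx c u v).testBit l = b) ↔ ((c u).testBit (bitIdx c u v) = false)

lemma bitIdx_symm {V : Type*} (c : V → ℕ) (u v : V) : bitIdx c v u = bitIdx c u v := by
  unfold bitIdx; rw [Nat.xor_comm]

lemma upper_aux {V : Type*} (G : SimpleGraph V) (n : ℕ) (hcol : G.Colorable n) :
    ∃ F : Fin (2 * Nat.clog 2 (Nat.clog 2 n) + 2) → V → V → Prop,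
      IsOrientationCover G F := by
  classical
  obtain ⟨C⟩ := hcol
  set s := Nat.clog 2 n with hs
  set t := Nat.clog 2 s with ht
  set c : V → ℕ := fun v => (C v : ℕ) with hc
  have hclt : ∀ v, c v < 2 ^ s := fun v =>
    lt_of_lt_of_le (C v).isLt (Nat.le_pow_clog one_lt_two n)
  have hcne : ∀ {u v : V}, G.Adj u v → c u ≠ c v := fun {u v} huv h =>
    C.valid huv (Fin.val_injective h)
  have hbit : ∀ {u v : V}, G.Adj u v →
      (c u).testBit (bitIdx c u v) ≠ (c v).testBit (bitIdx c u v) :=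
    fun {u v} huv => aux_bit_ne (hcne huv)
  have hjlt : ∀ {u v : V}, G.Adj u v → bitIdx c u v < 2 ^ t := by
    intro u v huv
    have h1 : bitIdx c u v < s :=
      Nat.log_lt_of_lt_pow (fun h0 => hcne huv (Nat.eq_of_testBit_eq fun i => by simpa [Nat.testBit_xor] using congrArg (Nat.testBit · i) h0))
        (Nat.xor_lt_two_pow (hclt u) (hclt v))
    exact lt_of_lt_of_le h1 (Nat.le_pow_clog one_lt_two s)
  set Fam : Bool ⊕ (Fin t × Bool) → V → V → Prop := fun i =>
    match i with
    | Sum.inl b => Por c b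
    | Sum.inr (l, b) => Qor c l.val b
    with hFam
  have hcard : Fintype.card (Fin (2 * t + 2)) = Fintype.card (Bool ⊕ (Fin t × Bool)) := by
    simp only [Fintype.card_fin, Fintype.card_sum, Fintype.card_bool, Fintype.card_prod]
    ring
  set e : Fin (2 * t + 2) ≃ (Bool ⊕ (Fin t × Bool)) := Fintype.equivOfCardEq hcard with he
  refine ⟨fun i => Fam (e i), ?_, ?_⟩
  · intro i u v huv
    have hb := hbit huv
    show Fam (e i) u v ↔ ¬ Fam (e i) v u
    rcases hei : e i with b | ⟨l, b⟩
    · show Por c b u v ↔ ¬ Por c b v u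
      unfold Por
      rw [bitIdx_symm c u v]
      exact bool1 hb
    · show Qor c l.val b u v ↔ ¬ Qor c l.val b v u
      unfold Qor
      rw [bitIdx_symm c u v]
      exact bool2 hb
  · intro v u w hvu hvw
    by_cases hcase : (c v).testBit (bitIdx c v u) = (c v).testBit (bitIdx c v w)
    · refine ⟨e.symm (Sum.inl (!(c v).testBit (bitIdx c v u))), ?_⟩
      simp only [Equiv.apply_symm_apply]
      constructor
      · show Por c _ v u
        exact bool3 (hbit hvu)
      · show Por c _ v w
        unfold Por
        rw [hcase]
        exact bool3 (hbit hvw)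
    · have hjne : bitIdx c v u ≠ bitIdx c v w := fun h => hcase (by rw [h])
      set l := Nat.log 2 (bitIdx c v u ^^^ bitIdx c v w) with hl
      have hlne : (bitIdx c v u).testBit l ≠ (bitIdx c v w).testBit l := aux_bit_ne hjne
      have hllt : l < t :=
        Nat.log_lt_of_lt_pow (fun h0 => hjne (Nat.eq_of_testBit_eq fun i => by simpa [Nat.testBit_xor] using congrArg (Nat.testBit · i) h0))
          (Nat.xor_lt_two_pow (hjlt hvu) (hjlt hvw))
      cases ha1 : (c v).testBit (bitIdx c v u) with
      | false =>
        have ha2 : (c v).testBit (bitIdx c v w) = true := by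
          cases h2' : (c v).testBit (bitIdx c v w)
          · exact absurd (by rw [ha1, h2']) hcase
          · rfl
        refine ⟨e.symm (Sum.inr (⟨l, hllt⟩, (bitIdx c v u).testBit l)), ?_⟩
        simp only [Equiv.apply_symm_apply]
        constructor
        · show Qor c l _ v u
          unfold Qor
          simp [ha1]
        · show Qor c l _ v w
          unfold Qor
          simp only [ha2]
          constructor
          · intro h; exact absurd h.symm hlne
          · intro h; exact absurd h (by simp)
      | true =>
        have ha2 : (c v).testBit (bitIdx c v w) = false := by
          cases h2' : (c v).testBit (bitIdx c v w)
          · rfl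
          · exact absurd (by rw [ha1, h2']) hcase
        refine ⟨e.symm (Sum.inr (⟨l, hllt⟩, (bitIdx c v w).testBit l)), ?_⟩
        simp only [Equiv.apply_symm_apply]
        constructor
        · show Qor c l _ v u
          unfold Qor
          simp only [ha1]
          constructor
          · intro h; exact absurd h hlne
          · intro h; exact absurd h (by simp)
        · show Qor c l _ v w
          unfold Qor
          simp [ha2]

/-! ### The lower-bound argument -/

def extFun {k : ℕ} (hk : 0 < k) (tt : Fin (k - 1) → Bool) : Fin k → Bool :=
  fun i => if h : (i : ℕ) = 0 then false
    else tt ⟨(i : ℕ) - 1, by have := i.isLt; omega⟩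

lemma extFun_eq {k : ℕ} (hk : 0 < k) (A : Fin k → Bool) (hA0 : A ⟨0, hk⟩ = false) :
    extFun hk (fun j => A ⟨(j : ℕ) + 1, by have := j.isLt; omega⟩) = A := by
  funext i
  unfold extFun
  by_cases h0 : (i : ℕ) = 0
  · rw [dif_pos h0, show i = ⟨0, hk⟩ from Fin.ext h0, hA0]
  · rw [dif_neg h0]
    show A ⟨(i : ℕ) - 1 + 1, by have := i.isLt; omega⟩ = A i
    congr 1
    apply Fin.ext
    show (i : ℕ) - 1 + 1 = (i : ℕ)
    omega

def SpecSet {V : Type*} (G : SimpleGraph V) {k : ℕ} (F : Fin k → V → V → Prop)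
    (v : V) (A : Fin k → Bool) : Prop :=
  ∃ u, G.Adj v u ∧ ∀ i, A i = true ↔ F i v u

lemma lower_aux {V : Type*} (G : SimpleGraph V) {k : ℕ} (F : Fin k → V → V → Prop)
    (hF : IsOrientationCover G F) (hk : 0 < k) : G.Colorable (2 ^ 2 ^ (k - 1)) := by
  classical
  have hvalid : ∀ {u v : V}, G.Adj u v →
      (fun tt => SpecSet G F u (extFun hk tt)) ≠ (fun tt => SpecSet G F v (extFun hk tt)) := by
    intro u v huv hcc
    set A : Fin k → Bool := fun i => decide (F i u v) with hA
    have hSuA : SpecSet G F u A := ⟨v, huv, fun i => by simp [hA]⟩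
    have hSvA' : SpecSet G F v (fun i => !A i) := by
      refine ⟨u, huv.symm, fun i => ?_⟩
      have hor := hF.1 i v u huv.symm
      simp [hA, hor]
    have hnSvA : ¬ SpecSet G F v A := by
      rintro ⟨w, hw, hspec⟩
      obtain ⟨i, h1, h2⟩ := hF.2 v u w huv.symm hw
      have hA1 : A i = true := (hspec i).mpr h2
      have hnuv : ¬ F i u v := (hF.1 i v u huv.symm).mp h1
      simp only [hA, decide_eq_true_eq] at hA1
      exact hnuv hA1
    have hnSuA' : ¬ SpecSet G F u (fun i => !A i) := by
      rintro ⟨w, hw, hspec⟩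
      obtain ⟨i, h1, h2⟩ := hF.2 u v w huv hw
      have hx : (!A i) = true := (hspec i).mpr h2
      have hA1 : A i = true := by simp [hA, h1]
      rw [hA1] at hx
      simp at hx
    by_cases hA0 : A ⟨0, hk⟩ = false
    · have hext := extFun_eq hk A hA0
      have h1 : SpecSet G F u A = SpecSet G F v A := by
        have := congrFun hcc (fun j => A ⟨(j : ℕ) + 1, by have := j.isLt; omega⟩)
        rwa [hext] at this
      exact hnSvA (h1 ▸ hSuA)
    · have hA0' : (fun i => !A i) ⟨0, hk⟩ = false := by
        simp only [Bool.not_eq_false']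
        simpa using hA0
      have hext := extFun_eq hk (fun i => !A i) hA0'
      have h1 : SpecSet G F u (fun i => !A i) = SpecSet G F v (fun i => !A i) := by
        have := congrFun hcc (fun j => !A ⟨(j : ℕ) + 1, by have := j.isLt; omega⟩)
        rwa [hext] at this
      exact hnSuA' (by rw [h1]; exact hSvA')
  have CC : G.Coloring ((Fin (k - 1) → Bool) → Prop) :=
    Coloring.mk (fun v tt => SpecSet G F v (extFun hk tt)) hvalid
  have hcol := CC.colorable
  have hcard : Fintype.card ((Fin (k - 1) → Bool) → Prop) = 2 ^ 2 ^ (k - 1) := by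
    simp [Fintype.card_fun]
  rwa [hcard] at hcol

/-- if `χ(G) ≥ 2`, then
`⌈log₂ log₂ χ(G)⌉ + 1 ≤ σ(G) ≤ 2⌈log₂ log₂ χ(G)⌉ + 2`. -/
theorem stmt13 {V : Type*} [Fintype V] (G : SimpleGraph V) (n : ℕ)
    (hn : G.chromaticNumber = n) (h2 : 2 ≤ n) :
    Nat.clog 2 (Nat.clog 2 n) + 1 ≤ orientCoverNum G ∧
      orientCoverNum G ≤ 2 * Nat.clog 2 (Nat.clog 2 n) + 2 := by
  classical
  have hcoln : G.Colorable n := chromaticNumber_le_iff_colorable.mp (le_of_eq hn)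
  obtain ⟨Fu, hFu⟩ := upper_aux G n hcoln
  have hmem : (2 * Nat.clog 2 (Nat.clog 2 n) + 2) ∈
      {k | ∃ F : Fin k → (V → V → Prop), IsOrientationCover G F} := ⟨Fu, hFu⟩
  have hupper : orientCoverNum G ≤ 2 * Nat.clog 2 (Nat.clog 2 n) + 2 := Nat.sInf_le hmem
  refine ⟨?_, hupper⟩
  have hne : {k | ∃ F : Fin k → (V → V → Prop), IsOrientationCover G F}.Nonempty :=
    ⟨_, hmem⟩
  obtain ⟨F, hF⟩ : ∃ F : Fin (orientCoverNum G) → (V → V → Prop), IsOrientationCover G F :=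
    Nat.sInf_mem hne
  have hedge : ∃ u v, G.Adj u v := by
    by_contra hno
    push_neg at hno
    have hc1 : G.Colorable 1 :=
      ⟨Coloring.mk (fun _ => (0 : Fin 1)) (fun {a b} hab => absurd hab (hno a b))⟩
    have hle := hc1.chromaticNumber_le
    rw [hn] at hle
    have : n ≤ 1 := by exact_mod_cast hle
    omega
  have hk0 : 0 < orientCoverNum G := by
    by_contra hzero
    push_neg at hzero
    obtain ⟨u, v, huv⟩ := hedge
    obtain ⟨i, -⟩ := hF.2 u v v huv huv
    have := i.isLt
    omega
  have hcolor := lower_aux G F hF hk0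
  have hle : (n : ℕ∞) ≤ ((2 ^ 2 ^ (orientCoverNum G - 1) : ℕ) : ℕ∞) := by
    rw [← hn]
    exact hcolor.chromaticNumber_le
  have hlen : n ≤ 2 ^ 2 ^ (orientCoverNum G - 1) := by exact_mod_cast hle
  have hst1 : Nat.clog 2 n ≤ 2 ^ (orientCoverNum G - 1) :=
    le_trans (Nat.clog_mono_right 2 hlen) (le_of_eq (Nat.clog_pow 2 _ one_lt_two))
  have hst2 : Nat.clog 2 (Nat.clog 2 n) ≤ orientCoverNum G - 1 :=
    le_trans (Nat.clog_mono_right 2 hst1) (le_of_eq (Nat.clog_pow 2 _ one_lt_two))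
  omega
end

section
/- If G is a graph with σ(G) = k ≥ 3, then χ(G) ≤ k + 2^(2^(k-1) - k - 1). -/
open SimpleGraph

open Finset in
private lemma card_finset_fin (k : ℕ) : Fintype.card (Finset (Fin k)) = 2 ^ k := by
  simp [Fintype.card_finset]

open Finset in
private lemma mem_or_compl_mem {k : ℕ} {t : Finset (Finset (Fin k))}
    (ht : (t : Set (Finset (Fin k))).Intersecting) (hcard : 2 * t.card = 2 ^ k)
    (a : Finset (Fin k)) : a ∈ t ∨ aᶜ ∈ t := by
  by_contra h
  push_neg at h
  have huniv : t.disjUnion (t.map ⟨compl, compl_injective⟩) ht.disjoint_map_compl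
      = Finset.univ := by
    apply Finset.eq_univ_of_card
    rw [card_disjUnion, card_map, card_finset_fin, ← two_mul, hcard]
  have hmem : a ∈ t.disjUnion (t.map ⟨compl, compl_injective⟩) ht.disjoint_map_compl := by
    rw [huniv]; exact mem_univ a
  rw [Finset.mem_disjUnion, Finset.mem_map] at hmem
  obtain h1 | ⟨b, hb, hba⟩ := hmem
  · exact h.1 h1
  · apply h.2
    have hb' : b = aᶜ := by
      have : bᶜ = a := hba
      rw [← this, compl_compl]
    rwa [hb'] at hb


open Finset in

private lemma cardR {k : ℕ} (h3 : 3 ≤ k) :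
    (Finset.univ.filter (fun A : Finset (Fin k) =>
      2 ≤ A.card ∧ A.card ≤ k - 2 ∧ (⟨0, by omega⟩ : Fin k) ∈ A)).card
      ≤ 2 ^ (k - 1) - k - 1 := by
  classical
  set z : Fin k := ⟨0, by omega⟩ with hz
  set S : Finset (Finset (Fin k)) := Finset.univ.filter (fun A => z ∈ A) with hS
  set T : Finset (Finset (Fin k)) :=
    insert Finset.univ (insert {z}
      ((Finset.univ.erase z).image (fun i => Finset.univ.erase i))) with hT
  have hcard_univ : (Finset.univ : Finset (Fin k)).card = k := by simp
  have hTS : T ⊆ S := by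
    intro A hA
    simp only [hT, mem_insert, mem_image, mem_erase] at hA
    rcases hA with rfl | rfl | ⟨i, ⟨hi, _⟩, rfl⟩
    · simp [hS]
    · simp [hS]
    · rw [hS, mem_filter]
      refine ⟨mem_univ _, ?_⟩
      rw [mem_erase]
      exact ⟨fun hzi => hi hzi.symm, mem_univ z⟩
  have hRS : (Finset.univ.filter (fun A : Finset (Fin k) =>
      2 ≤ A.card ∧ A.card ≤ k - 2 ∧ z ∈ A)) ⊆ S \ T := by
    intro A hA
    rw [mem_filter] at hA
    obtain ⟨-, h2, hk2, h0⟩ := hA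
    rw [mem_sdiff]
    constructor
    · simp [hS, h0]
    · simp only [hT, mem_insert, mem_image, mem_erase, not_or]
      refine ⟨?_, ?_, ?_⟩
      · rintro rfl; omega
      · rintro rfl; simp at h2
      · rintro ⟨i, ⟨hi, -⟩, rfl⟩
        rw [Finset.card_erase_of_mem (mem_univ i), hcard_univ] at hk2 h2
        omega
  have hScard : S.card ≤ 2 ^ (k - 1) := by
    have : S.card ≤ ((Finset.univ.erase z).powerset).card := by
      apply Finset.card_le_card_of_injOn (fun A => A.erase z)
      · intro A hA
        rw [Finset.mem_coe, mem_powerset]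
        exact Finset.erase_subset_erase z (subset_univ A)
      · intro A₁ h₁ A₂ h₂ he
        simp only [hS, coe_filter, Set.mem_setOf_eq] at h₁ h₂
        simp only at he
        rw [← Finset.insert_erase h₁.2, he, Finset.insert_erase h₂.2]
    rwa [card_powerset, Finset.card_erase_of_mem (mem_univ z), hcard_univ] at this
  have hTcard : k + 1 ≤ T.card := by
    have himg : ((Finset.univ.erase z).image (fun i => Finset.univ.erase i)).card = k - 1 := by
      rw [Finset.card_image_of_injOn, Finset.card_erase_of_mem (mem_univ z), hcard_univ]
      intro i _ j _ hij
      by_contra hne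
      have : i ∈ Finset.univ.erase j := by
        rw [mem_erase]; exact ⟨hne, mem_univ i⟩
      simp only at hij
      rw [← hij] at this
      exact (Finset.notMem_erase i Finset.univ) this
    have hz_img : ({z} : Finset (Fin k)) ∉
        (Finset.univ.erase z).image (fun i => Finset.univ.erase i) := by
      rw [mem_image]
      rintro ⟨i, -, h⟩
      have := congrArg Finset.card h
      rw [Finset.card_erase_of_mem (mem_univ i), hcard_univ, Finset.card_singleton] at this
      omega
    have huniv_nmem : (Finset.univ : Finset (Fin k)) ∉
        insert {z} ((Finset.univ.erase z).image (fun i => Finset.univ.erase i)) := by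
      rw [mem_insert, mem_image]
      rintro (h | ⟨i, -, h⟩)
      · have := congrArg Finset.card h
        rw [hcard_univ, Finset.card_singleton] at this; omega
      · have := congrArg Finset.card h
        rw [Finset.card_erase_of_mem (mem_univ i), hcard_univ] at this; omega
    rw [hT, Finset.card_insert_of_notMem huniv_nmem, Finset.card_insert_of_notMem hz_img, himg]
    omega
  calc (Finset.univ.filter (fun A : Finset (Fin k) =>
          2 ≤ A.card ∧ A.card ≤ k - 2 ∧ z ∈ A)).card
      ≤ (S \ T).card := Finset.card_le_card hRS
    _ = S.card - T.card := Finset.card_sdiff_of_subset hTS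
    _ ≤ 2 ^ (k - 1) - (k + 1) := tsub_le_tsub hScard hTcard
    _ = 2 ^ (k - 1) - k - 1 := by omega

open Finset in
private lemma count_max {k : ℕ} (h3 : 3 ≤ k) (𝕄 : Finset (Finset (Finset (Fin k))))
    (h𝕄 : ∀ t ∈ 𝕄, (t : Set (Finset (Fin k))).Intersecting ∧ 2 * t.card = 2 ^ k) :
    𝕄.card ≤ k + 2 ^ (2 ^ (k - 1) - k - 1) := by
  classical
  set z : Fin k := ⟨0, by omega⟩ with hz
  set P : Finset (Finset (Fin k)) → Prop := fun t => ∃ i : Fin k, {i} ∈ t with hP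
  have hsplit := Finset.card_filter_add_card_filter_not (s := 𝕄) P
  set A := 𝕄.filter P with hA
  set B := 𝕄.filter (fun t => ¬ P t) with hB
  -- star lemma
  have star_eq : ∀ t ∈ 𝕄, ∀ i : Fin k, {i} ∈ t →
      t = Finset.univ.filter (fun a : Finset (Fin k) => i ∈ a) := by
    intro t ht i hi
    obtain ⟨hint, hcard⟩ := h𝕄 t ht
    set st := Finset.univ.filter (fun a : Finset (Fin k) => i ∈ a) with hst
    have hsub : t ⊆ st := by
      intro a ha
      rw [hst, mem_filter]
      refine ⟨mem_univ _, ?_⟩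
      have := hint ha hi
      rwa [Finset.disjoint_singleton_right, not_not] at this
    have hstint : (st : Set (Finset (Fin k))).Intersecting := by
      intro a ha b hb
      rw [Finset.mem_coe, hst, mem_filter] at ha hb
      exact Finset.not_disjoint_iff.2 ⟨i, ha.2, hb.2⟩
    have : st.card ≤ t.card := by
      have h2 := hstint.card_le
      rw [card_finset_fin] at h2
      omega
    exact (Finset.eq_of_subset_of_card_le hsub this).symm ▸ rfl
  have hAcard : A.card ≤ k := by
    have : A.card ≤ (Finset.univ : Finset (Fin k)).card := by
      apply Finset.card_le_card_of_injOn
        (fun t => if h : P t then h.choose else z)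
      · intro t _; exact mem_univ _
      · intro t₁ h₁ t₂ h₂ he
        rw [Finset.mem_coe, hA, mem_filter] at h₁ h₂
        simp only [dif_pos h₁.2, dif_pos h₂.2] at he
        rw [star_eq t₁ h₁.1 _ h₁.2.choose_spec, star_eq t₂ h₂.1 _ h₂.2.choose_spec, he]
    simpa using this
  have hBcard : B.card ≤ 2 ^ (2 ^ (k - 1) - k - 1) := by
    set R : Finset (Finset (Fin k)) := Finset.univ.filter (fun A : Finset (Fin k) =>
      2 ≤ A.card ∧ A.card ≤ k - 2 ∧ z ∈ A) with hR
    have key : ∀ t₁ ∈ B, ∀ t₂ ∈ B, t₁ ∩ R = t₂ ∩ R → t₁ ⊆ t₂ := by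
      intro t₁ ht₁ t₂ ht₂ hTR a ha
      rw [hB, mem_filter] at ht₁ ht₂
      obtain ⟨ht₁M, hns₁⟩ := ht₁
      obtain ⟨ht₂M, hns₂⟩ := ht₂
      obtain ⟨hint₁, hcard₁⟩ := h𝕄 t₁ ht₁M
      obtain ⟨hint₂, hcard₂⟩ := h𝕄 t₂ ht₂M
      have hane : a.card ≠ 0 := by
        intro h
        rw [Finset.card_eq_zero] at h
        subst h
        exact hint₁.bot_notMem ha
      have h1 : a.card ≠ 1 := by
        intro h
        obtain ⟨i, rfl⟩ := Finset.card_eq_one.1 h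
        exact hns₁ ⟨i, ha⟩
      have hale : a.card ≤ k := by
        have := Finset.card_le_univ a
        simpa using this
      have hcompl : aᶜ.card = k - a.card := by
        rw [Finset.card_compl, Fintype.card_fin]
      by_cases hbig : k - 1 ≤ a.card
      · have hnc : aᶜ ∉ t₂ := by
          intro hmem
          have hc1 : aᶜ.card ≤ 1 := by omega
          interval_cases h : aᶜ.card
          · rw [Finset.card_eq_zero] at h
            rw [h] at hmem
            exact hint₂.bot_notMem hmem
          · obtain ⟨i, hi⟩ := Finset.card_eq_one.1 h
            rw [hi] at hmem
            exact hns₂ ⟨i, hmem⟩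
        exact (mem_or_compl_mem hint₂ hcard₂ a).resolve_right hnc
      · have h2 : 2 ≤ a.card := by omega
        have hk2 : a.card ≤ k - 2 := by omega
        by_cases h0 : z ∈ a
        · have haR : a ∈ R := by
            rw [hR, mem_filter]; exact ⟨mem_univ _, h2, hk2, h0⟩
          have : a ∈ t₂ ∩ R := by
            rw [← hTR, mem_inter]; exact ⟨ha, haR⟩
          exact (mem_inter.1 this).1
        · have h0c : z ∈ aᶜ := Finset.mem_compl.2 h0
          have hRc : aᶜ ∈ R := by
            rw [hR, mem_filter]
            exact ⟨mem_univ _, by omega, by omega, h0c⟩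
          have hnc₁ : aᶜ ∉ t₁ := hint₁.compl_notMem ha
          have hnc₂ : aᶜ ∉ t₂ := by
            intro hm
            apply hnc₁
            have : aᶜ ∈ t₁ ∩ R := by
              rw [hTR, mem_inter]; exact ⟨hm, hRc⟩
            exact (mem_inter.1 this).1
          have := mem_or_compl_mem hint₂ hcard₂ aᶜ
          rw [compl_compl] at this
          exact this.resolve_left hnc₂
    have : B.card ≤ (R.powerset).card := by
      apply Finset.card_le_card_of_injOn (fun t => t ∩ R)
      · intro t _
        rw [Finset.mem_coe, mem_powerset]; exact Finset.inter_subset_right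
      · intro t₁ h₁ t₂ h₂ he
        simp only at he
        exact Finset.Subset.antisymm (key t₁ h₁ t₂ h₂ he) (key t₂ h₂ t₁ h₁ he.symm)
    rw [card_powerset] at this
    calc B.card ≤ 2 ^ R.card := this
      _ ≤ 2 ^ (2 ^ (k - 1) - k - 1) := Nat.pow_le_pow_right (by norm_num) (cardR h3)
  omega

/-- if `σ(G) = k ≥ 3`, then `χ(G) ≤ k + 2^(2^(k-1) - k - 1)`. -/
theorem stmt14 {V : Type*} (G : SimpleGraph V) (k : ℕ)
    (hk : orientCoverNum G = k) (h3 : 3 ≤ k) :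
    G.chromaticNumber ≤ ((k + 2 ^ (2 ^ (k - 1) - k - 1) : ℕ) : ℕ∞) := by
  classical
  -- extract an orientation cover of size k
  obtain ⟨F, hFor, hFcov⟩ : ∃ F : Fin k → (V → V → Prop), IsOrientationCover G F := by
    have hne : {k' | ∃ F : Fin k' → (V → V → Prop), IsOrientationCover G F}.Nonempty := by
      by_contra h
      rw [Set.not_nonempty_iff_eq_empty] at h
      rw [orientCoverNum, h, Nat.sInf_empty] at hk
      omega
    have hmem := Nat.sInf_mem hne
    rw [show sInf {k' | ∃ F : Fin k' → (V → V → Prop), IsOrientationCover G F}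
        = orientCoverNum G from rfl, hk] at hmem
    exact hmem
  haveI : Nontrivial (Finset (Fin k)) :=
    ⟨∅, {⟨0, by omega⟩}, (Finset.singleton_ne_empty _).symm⟩
  -- the out-sets
  set D : V → V → Finset (Fin k) :=
    fun v u => Finset.univ.filter (fun i => F i v u) with hD
  set Dfam : V → Finset (Finset (Fin k)) :=
    fun v => Set.Finite.toFinset (Set.toFinite ((fun u => D v u) '' {u | G.Adj v u})) with hDfam
  have hDint : ∀ v, ((Dfam v : Finset (Finset (Fin k))) : Set (Finset (Fin k))).Intersecting := by
    intro v a ha b hb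
    rw [Finset.mem_coe, hDfam, Set.Finite.mem_toFinset] at ha hb
    obtain ⟨u, hu, rfl⟩ := ha
    obtain ⟨w, hw, rfl⟩ := hb
    obtain ⟨i, hiu, hiw⟩ := hFcov v u w hu hw
    exact Finset.not_disjoint_iff.2 ⟨i, by simp [hD, hiu], by simp [hD, hiw]⟩
  -- maximal intersecting extensions
  have hext : ∀ v : V, ∃ t, Dfam v ⊆ t ∧ 2 * t.card = Fintype.card (Finset (Fin k))
      ∧ (t : Set (Finset (Fin k))).Intersecting :=
    fun v => (hDint v).exists_card_eq
  choose M hsub hcard hint using hext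
  set 𝕄 : Finset (Finset (Finset (Fin k))) :=
    Finset.univ.filter (fun t => (t : Set (Finset (Fin k))).Intersecting
      ∧ 2 * t.card = 2 ^ k) with h𝕄def
  have hMmem : ∀ v, M v ∈ 𝕄 := by
    intro v
    rw [h𝕄def, Finset.mem_filter]
    refine ⟨Finset.mem_univ _, hint v, ?_⟩
    have := hcard v
    rwa [card_finset_fin] at this
  -- proper coloring
  have hproper : ∀ {u v : V}, G.Adj u v → M u ≠ M v := by
    intro u v hadj heq
    have hvu : D v u ∈ M v := by
      apply hsub v
      rw [hDfam, Set.Finite.mem_toFinset]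
      exact ⟨u, hadj.symm, rfl⟩
    have huv : D u v ∈ M v := by
      rw [← heq]
      apply hsub u
      rw [hDfam, Set.Finite.mem_toFinset]
      exact ⟨v, hadj, rfl⟩
    have hcompl : D u v = (D v u)ᶜ := by
      ext i
      simp only [hD, Finset.mem_filter, Finset.mem_univ, true_and, Finset.mem_compl]
      exact hFor i u v hadj
    exact (hint v) hvu huv (by rw [hcompl]; exact disjoint_compl_right)
  have hcol : G.Colorable (Fintype.card {x // x ∈ 𝕄}) := by
    exact (SimpleGraph.Coloring.mk (fun v => (⟨M v, hMmem v⟩ : {x // x ∈ 𝕄}))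
      (fun hadj h => hproper hadj (congrArg Subtype.val h))).colorable
  have hfin : G.Colorable (k + 2 ^ (2 ^ (k - 1) - k - 1)) := by
    apply hcol.mono
    rw [Fintype.card_coe]
    exact count_max h3 𝕄 (fun t ht => (Finset.mem_filter.1 ht).2)
  exact hfin.chromaticNumber_le
end

section
/- In any orientation covering of a graph G of minimum degree at least 2 using k orientations, for each i ∈ [k] the set S_i of vertices v having a neighbor u such that the edge uv is directed out of v in orientation i only, is a stable (independent) set. -/
open SimpleGraph

/-- in any orientation covering of a graph of minimum degree at
least 2, each set `S_i = {v | ∃ u, o(v,uv) = {i}}` is a stable set. -/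
theorem stmt15 {V : Type*} [Fintype V] (G : SimpleGraph V) [DecidableRel G.Adj]
    (hdeg : ∀ v, 2 ≤ G.degree v) (k : ℕ) (F : Fin k → (V → V → Prop))
    (hF : IsOrientationCover G F) :
    ∀ i : Fin k, ∀ v w : V,
      (∃ u, G.Adj v u ∧ {j | F j v u} = ({i} : Set (Fin k))) →
      (∃ u, G.Adj w u ∧ {j | F j w u} = ({i} : Set (Fin k))) →
      ¬ G.Adj v w := by
  rintro i v w ⟨u, hvu, hu⟩ ⟨x, hwx, hx⟩ hvw
  obtain ⟨j, hjvu, hjvw⟩ := hF.2 v u w hvu hvw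
  have hji : j = i := by
    have : j ∈ {j | F j v u} := hjvu
    rw [hu] at this; exact this
  obtain ⟨j', hj'wx, hj'wv⟩ := hF.2 w x v hwx hvw.symm
  have hj'i : j' = i := by
    have : j' ∈ {j | F j w x} := hj'wx
    rw [hx] at this; exact this
  rw [hji] at hjvw
  rw [hj'i] at hj'wv
  exact ((hF.1 i) v w hvw).mp hjvw hj'wv
end

section
/- σ(G) = 2 if and only if G is bipartite with at least one edge. Moreover σ(G) = 3 if and only if 3 ≤ χ(G) ≤ 4. -/
open SimpleGraph

section aux
variable {V : Type*} {G : SimpleGraph V}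


/-- no edges → empty cover works -/
lemma cover0_of_noedge (h : ∀ u v, ¬ G.Adj u v) :
    ∃ F : Fin 0 → (V → V → Prop), IsOrientationCover G F :=
  ⟨fun i => i.elim0, fun i => i.elim0, fun v u w hvu => absurd hvu (h v u)⟩

/-- edge → no cover of size ≤ 1 -/
lemma edge_no_small_cover {u v : V} (huv : G.Adj u v) {k : ℕ} (hk : k ≤ 1)
    (F : Fin k → (V → V → Prop)) (hF : IsOrientationCover G F) : False := by
  obtain ⟨i, hi, -⟩ := hF.2 u v v huv huv
  obtain ⟨j, hj, -⟩ := hF.2 v u u huv.symm huv.symm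
  have hij : i = j := by omega
  exact ((hF.1 i u v huv).mp hi) (hij ▸ hj)

lemma cover2_of_col2 (c : G.Coloring (Fin 2)) :
    ∃ F : Fin 2 → (V → V → Prop), IsOrientationCover G F := by
  refine ⟨fun i u v => c u = i, fun i u v huv => ?_, fun v u w hvu hvw => ⟨c v, rfl, rfl⟩⟩
  have := c.valid huv
  constructor
  · intro h h'; exact this (h.trans h'.symm)
  · intro h; by_contra h'; exact h (by omega)

lemma col2_of_cover2 (F : Fin 2 → (V → V → Prop)) (hF : IsOrientationCover G F) :
    G.Colorable 2 := by
  classical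
  -- exclusivity: for an edge, not both orientations direct it the same way
  have excl : ∀ u v, G.Adj u v → ¬ (F 0 u v ∧ F 1 u v) := by
    rintro u v huv ⟨h0, h1⟩
    obtain ⟨i, hi, -⟩ := hF.2 v u u huv.symm huv.symm
    have : ¬ F i u v := (hF.1 i v u huv.symm).mp hi
    have : i = 0 ∨ i = 1 := by omega
    rcases this with rfl | rfl <;> simp_all
  refine ⟨Coloring.mk (fun v => if ∃ u, G.Adj v u ∧ F 0 v u then 0 else 1) ?_⟩
  intro u v huv h0
  have h : (if ∃ x, G.Adj u x ∧ F 0 u x then (0:Fin 2) else 1)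
      = (if ∃ y, G.Adj v y ∧ F 0 v y then 0 else 1) := h0
  clear h0
  by_cases hu : ∃ x, G.Adj u x ∧ F 0 u x <;> by_cases hv : ∃ y, G.Adj v y ∧ F 0 v y
  · -- both color 0
    obtain ⟨x, hux, hx⟩ := hu
    obtain ⟨y, hvy, hy⟩ := hv
    obtain ⟨i, hi1, hi2⟩ := hF.2 u x v hux huv
    obtain ⟨j, hj1, hj2⟩ := hF.2 v y u hvy huv.symm
    have hi0 : i = 0 := by
      rcases (show i = 0 ∨ i = 1 by omega) with rfl | rfl
      · rfl
      · exact absurd ⟨hx, hi1⟩ (excl u x hux)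
    have hj0 : j = 0 := by
      rcases (show j = 0 ∨ j = 1 by omega) with rfl | rfl
      · rfl
      · exact absurd ⟨hy, hj1⟩ (excl v y hvy)
    subst hi0; subst hj0
    exact ((hF.1 0 u v huv).mp hi2) hj2
  · rw [if_pos hu, if_neg hv] at h; exact absurd h (by decide)
  · rw [if_neg hu, if_pos hv] at h; exact absurd h (by decide)
  · -- both color 1 : no F 0 out-edge at u or v
    push_neg at hu hv
    obtain ⟨i, hi, -⟩ := hF.2 u v v huv huv
    obtain ⟨j, hj, -⟩ := hF.2 v u u huv.symm huv.symm
    have hi1 : i = 1 := by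
      rcases (show i = 0 ∨ i = 1 by omega) with rfl | rfl
      · exact absurd hi (hu v huv)
      · rfl
    have hj1 : j = 1 := by
      rcases (show j = 0 ∨ j = 1 by omega) with rfl | rfl
      · exact absurd hj (hv u huv.symm)
      · rfl
    subst hi1; subst hj1
    exact ((hF.1 1 u v huv).mp hi) hj



lemma fin3_sing (p : Fin 3 → Prop) (h1 : ∃ i, p i) (h2 : ∃ i, ¬ p i) :
    (∃ i, p i ∧ ∀ j, p j → j = i) ∨ (∃ i, ¬ p i ∧ ∀ j, ¬ p j → j = i) := by
  by_cases q0 : p 0 <;> by_cases q1 : p 1 <;> by_cases q2 : p 2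
  · exact absurd h2 (by rintro ⟨i, hi⟩; fin_cases i <;> simp_all)
  · exact Or.inr ⟨2, q2, fun j hj => by fin_cases j <;> simp_all⟩
  · exact Or.inr ⟨1, q1, fun j hj => by fin_cases j <;> simp_all⟩
  · exact Or.inl ⟨0, q0, fun j hj => by fin_cases j <;> simp_all⟩
  · exact Or.inr ⟨0, q0, fun j hj => by fin_cases j <;> simp_all⟩
  · exact Or.inl ⟨1, q1, fun j hj => by fin_cases j <;> simp_all⟩
  · exact Or.inl ⟨2, q2, fun j hj => by fin_cases j <;> simp_all⟩
  · exact absurd h1 (by rintro ⟨i, hi⟩; fin_cases i <;> simp_all)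

lemma cover3_of_col4 (c : G.Coloring (Fin 4)) :
    ∃ F : Fin 3 → (V → V → Prop), IsOrientationCover G F := by
  refine ⟨fun i u v => if c u < c v then (i : Fin 3).val = (c u).val else i.val ≠ (c v).val,
    fun i u v huv => ?_, fun v u w hvu hvw => ?_⟩
  · show (if c u < c v then (i:Fin 3).val = (c u).val else i.val ≠ (c v).val) ↔
      ¬ (if c v < c u then (i:Fin 3).val = (c v).val else i.val ≠ (c u).val)
    have hne := c.valid huv
    rcases lt_or_gt_of_ne hne with h | h
    · rw [if_pos h, if_neg (not_lt.mpr h.le)]; tauto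
    · rw [if_neg (not_lt.mpr h.le), if_pos h]
  · have hb := c.valid hvu
    have hd := c.valid hvw
    show ∃ i : Fin 3, (if c v < c u then (i:Fin 3).val = (c v).val else i.val ≠ (c u).val) ∧
      (if c v < c w then (i:Fin 3).val = (c v).val else i.val ≠ (c w).val)
    by_cases ha : (c v).val < 3
    · refine ⟨⟨(c v).val, ha⟩, ?_, ?_⟩
      · split
        · rfl
        · exact fun h => hb (Fin.ext h)
      · split
        · rfl
        · exact fun h => hd (Fin.ext h)
    · -- c v = 3, so c u, c w < c v
      have hb3 : (c u).val < 3 := by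
        have := (c u).isLt; have := Fin.val_ne_of_ne hb; omega
      have hd3 : (c w).val < 3 := by
        have := (c w).isLt; have := Fin.val_ne_of_ne hd; omega
      set n : ℕ := if ((c u).val + 1) % 3 = (c w).val then ((c u).val + 2) % 3
        else ((c u).val + 1) % 3 with hn
      have hprop : n < 3 ∧ n ≠ (c u).val ∧ n ≠ (c w).val := by
        rw [hn]; split <;> omega
      refine ⟨⟨n, hprop.1⟩, ?_, ?_⟩
      · rw [if_neg (by intro h; have := Fin.lt_def.mp h; omega)]
        exact hprop.2.1
      · rw [if_neg (by intro h; have := Fin.lt_def.mp h; omega)]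
        exact hprop.2.2

lemma col4_of_cover3 (F : Fin 3 → (V → V → Prop)) (hF : IsOrientationCover G F) :
    G.Colorable 4 := by
  classical
  set Sing : V → V → Fin 3 → Prop := fun v x i => F i v x ∧ ∀ j, F j v x → j = i with hS
  -- if a vertex has a singleton out-set with index i, every out-edge is in F i
  have key : ∀ v x y i, G.Adj v x → G.Adj v y → Sing v x i → F i v y := by
    intro v x y i hvx hvy ⟨h1, h2⟩
    obtain ⟨j, hj1, hj2⟩ := hF.2 v x y hvx hvy
    exact (h2 j hj1) ▸ hj2
  refine ⟨Coloring.mk (fun v => if h : ∃ i x, G.Adj v x ∧ Sing v x i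
      then (h.choose).castSucc else 3) ?_⟩
  intro u v huv h00
  have h0 : (if h : ∃ i x, G.Adj u x ∧ Sing u x i then (h.choose).castSucc else (3:Fin 4))
      = (if h : ∃ i y, G.Adj v y ∧ Sing v y i then (h.choose).castSucc else 3) := h00
  clear h00
  by_cases hu : ∃ i x, G.Adj u x ∧ Sing u x i <;>
    by_cases hv : ∃ i y, G.Adj v y ∧ Sing v y i
  · rw [dif_pos hu, dif_pos hv] at h0
    obtain ⟨x, hux, hsx⟩ := hu.choose_spec
    obtain ⟨y, hvy, hsy⟩ := hv.choose_spec
    have h1 : F hu.choose u v := key u x v _ hux huv hsx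
    have h2 : F hv.choose v u := key v y u _ hvy huv.symm hsy
    have : hu.choose = hv.choose := Fin.castSucc_injective _ h0
    exact ((hF.1 _ u v huv).mp h1) (this ▸ h2)
  · rw [dif_pos hu, dif_neg hv] at h0
    exact absurd (congrArg Fin.val h0) (by have := (hu.choose).isLt; simp; omega)
  · rw [dif_neg hu, dif_pos hv] at h0
    exact absurd (congrArg Fin.val h0) (by have := (hv.choose).isLt; simp; omega)
  · -- no singletons at u or v; but the edge uv forces one
    push_neg at hu hv
    have e1 : ∃ i, F i u v := by
      obtain ⟨i, hi, -⟩ := hF.2 u v v huv huv; exact ⟨i, hi⟩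
    have e2 : ∃ i, ¬ F i u v := by
      obtain ⟨i, hi, -⟩ := hF.2 v u u huv.symm huv.symm
      exact ⟨i, (hF.1 i v u huv.symm).mp hi⟩
    rcases fin3_sing (fun i => F i u v) e1 e2 with ⟨i, hi, hall⟩ | ⟨i, hi, hall⟩
    · exact hu i v huv ⟨hi, hall⟩
    · refine hv i u huv.symm ⟨(hF.1 i v u huv.symm).mpr hi, fun j hj => ?_⟩
      exact hall j ((hF.1 j v u huv.symm).mp hj)
    
end aux

/-- `σ(G) = 2` iff `G` is bipartite with an edge, and `σ(G) = 3`
iff `3 ≤ χ(G) ≤ 4`. -/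
theorem stmt16 {V : Type*} [Fintype V] (G : SimpleGraph V) :
    (orientCoverNum G = 2 ↔ (G.Colorable 2 ∧ G.edgeSet.Nonempty)) ∧
    (orientCoverNum G = 3 ↔ (3 ≤ G.chromaticNumber ∧ G.chromaticNumber ≤ 4)) := by
  classical
  set S : Set ℕ := {k | ∃ F : Fin k → (V → V → Prop), IsOrientationCover G F} with hSdef
  have hocn : orientCoverNum G = sInf S := rfl
  have hSne_of : ∀ n, n ≠ 0 → sInf S = n → S.Nonempty := by
    intro n hn h
    by_contra hne
    rw [Set.not_nonempty_iff_eq_empty] at hne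
    rw [hne, Nat.sInf_empty] at h
    exact hn h.symm
  have hedge_iff : G.edgeSet.Nonempty ↔ ∃ u v, G.Adj u v := by
    constructor
    · rintro ⟨e, he⟩
      induction e using Sym2.ind with
      | _ u v => exact ⟨u, v, he⟩
    · rintro ⟨u, v, huv⟩
      exact ⟨s(u, v), huv⟩
  have hzero : ∀ u v, G.Adj u v → 0 ∉ S := by
    rintro u v huv ⟨F, hF⟩
    exact edge_no_small_cover huv (by omega) F hF
  have htwo_mem : G.Colorable 2 → 2 ∈ S := fun ⟨c⟩ => cover2_of_col2 c
  have hnoedge_col2 : (∀ u v, ¬ G.Adj u v) → G.Colorable 2 := by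
    intro h
    exact ⟨Coloring.mk (fun _ => 0) (fun {u v} huv => absurd huv (h u v))⟩
  constructor
  · constructor
    · intro h
      rw [hocn] at h
      have hne := hSne_of 2 (by omega) h
      have h2 : 2 ∈ S := h ▸ Nat.sInf_mem hne
      obtain ⟨F, hF⟩ := h2
      refine ⟨col2_of_cover2 F hF, ?_⟩
      rw [hedge_iff]
      by_contra hno
      push_neg at hno
      have h0 : 0 ∈ S := cover0_of_noedge hno
      have := Nat.sInf_le h0
      omega
    · rintro ⟨hcol, hE⟩
      obtain ⟨u, v, huv⟩ := hedge_iff.mp hE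
      rw [hocn]
      refine IsLeast.csInf_eq ⟨htwo_mem hcol, ?_⟩
      rintro m ⟨F, hF⟩
      by_contra hm
      exact edge_no_small_cover huv (by omega) F hF
  · constructor
    · intro h
      rw [hocn] at h
      have hne := hSne_of 3 (by omega) h
      have h3 : 3 ∈ S := h ▸ Nat.sInf_mem hne
      obtain ⟨F, hF⟩ := h3
      have hc4 : G.Colorable 4 := col4_of_cover3 F hF
      have hnc2 : ¬ G.Colorable 2 := by
        intro hc2
        have := Nat.sInf_le (htwo_mem hc2)
        omega
      constructor
      · have h2 : ¬ (G.chromaticNumber ≤ ((2:ℕ):ℕ∞)) := by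
          rw [chromaticNumber_le_iff_colorable]; exact hnc2
        have hlt : ((2:ℕ):ℕ∞) < G.chromaticNumber := lt_of_not_ge h2
        have := Order.add_one_le_of_lt hlt
        calc (3:ℕ∞) = ((2:ℕ):ℕ∞) + 1 := by norm_num
          _ ≤ G.chromaticNumber := this
      · calc G.chromaticNumber ≤ ((4:ℕ):ℕ∞) :=
            chromaticNumber_le_iff_colorable.mpr hc4
          _ = 4 := by norm_num
    · rintro ⟨h3, h4⟩
      have hc4 : G.Colorable 4 := by
        rw [← chromaticNumber_le_iff_colorable]
        calc G.chromaticNumber ≤ 4 := h4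
          _ = ((4:ℕ):ℕ∞) := by norm_num
      have hnc2 : ¬ G.Colorable 2 := by
        intro hc2
        have h2 : G.chromaticNumber ≤ ((2:ℕ):ℕ∞) :=
          chromaticNumber_le_iff_colorable.mpr hc2
        have : (3:ℕ∞) ≤ ((2:ℕ):ℕ∞) := le_trans h3 h2
        norm_num at this
      have hedge : ∃ u v, G.Adj u v := by
        by_contra hno
        push_neg at hno
        exact hnc2 (hnoedge_col2 hno)
      obtain ⟨u, v, huv⟩ := hedge
      rw [hocn]
      refine IsLeast.csInf_eq ⟨(fun c => cover3_of_col4 c) hc4.some, ?_⟩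
      rintro m ⟨F, hF⟩
      by_contra hm
      push_neg at hm
      interval_cases m
      · exact edge_no_small_cover huv (by omega) F hF
      · exact edge_no_small_cover huv (by omega) F hF
      · exact hnc2 (col2_of_cover2 F hF)
end

section
/- σ(K_4) = 3: the complete graph on 4 vertices has an orientation covering of size 3 and none of size 2. -/
open SimpleGraph

/-- Explicit 3 orientations of `K_4`. -/
def myOr : Fin 3 → Fin 4 → Fin 4 → Prop := fun i u v =>
  (decide ((i, u, v) ∈ [
    ((0:Fin 3), (0:Fin 4), (1:Fin 4)), (0,0,2), (0,0,3), (0,3,1), (0,3,2), (0,1,2),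
    (1,1,0), (1,1,2), (1,1,3), (1,3,0), (1,3,2), (1,0,2),
    (2,2,0), (2,2,1), (2,2,3), (2,3,0), (2,3,1), (2,0,1)])) = true

lemma myOr_cover : IsOrientationCover (⊤ : SimpleGraph (Fin 4)) myOr := by
  have h1 : ∀ i : Fin 3, ∀ u v : Fin 4, u ≠ v → (myOr i u v ↔ ¬ myOr i v u) := by
    simp only [myOr]; decide
  have h2 : ∀ v u w : Fin 4, v ≠ u → v ≠ w → ∃ i, myOr i v u ∧ myOr i v w := by
    simp only [myOr]; decide
  exact ⟨fun i u v huv => h1 i u v (by simpa using huv),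
    fun v u w hvu hvw => h2 v u w (by simpa using hvu) (by simpa using hvw)⟩

lemma source_of_pairs (F : Fin 2 → Fin 4 → Fin 4 → Prop)
    (h : IsOrientationCover (⊤ : SimpleGraph (Fin 4)) F)
    (v a b c : Fin 4) (hva : v ≠ a) (hvb : v ≠ b) (hvc : v ≠ c) :
    ∃ i, F i v a ∧ F i v b ∧ F i v c := by
  obtain ⟨i1, h1, h2⟩ := h.2 v a b (by simpa using hva) (by simpa using hvb)
  obtain ⟨i2, h3, h4⟩ := h.2 v b c (by simpa using hvb) (by simpa using hvc)
  obtain ⟨i3, h5, h6⟩ := h.2 v a c (by simpa using hva) (by simpa using hvc)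
  by_cases e12 : i1 = i2
  · exact ⟨i1, h1, h2, e12 ▸ h4⟩
  by_cases e13 : i1 = i3
  · exact ⟨i1, h1, h2, e13 ▸ h6⟩
  have e23 : i2 = i3 := by fin_cases i1 <;> fin_cases i2 <;> fin_cases i3 <;> simp_all
  exact ⟨i2, e23 ▸ h5, h3, h4⟩

lemma no_two_cover :
    ¬ ∃ F : Fin 2 → (Fin 4 → Fin 4 → Prop),
      IsOrientationCover (⊤ : SimpleGraph (Fin 4)) F := by
  rintro ⟨F, hF⟩
  have key : ∀ v : Fin 4, ∃ i : Fin 2, ∀ u, u ≠ v → F i v u := by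
    intro v
    fin_cases v
    · obtain ⟨i, ha, hb, hc⟩ := source_of_pairs F hF 0 1 2 3 (by decide) (by decide) (by decide)
      exact ⟨i, fun u hu => by fin_cases u <;> simp_all⟩
    · obtain ⟨i, ha, hb, hc⟩ := source_of_pairs F hF 1 0 2 3 (by decide) (by decide) (by decide)
      exact ⟨i, fun u hu => by fin_cases u <;> simp_all⟩
    · obtain ⟨i, ha, hb, hc⟩ := source_of_pairs F hF 2 0 1 3 (by decide) (by decide) (by decide)
      exact ⟨i, fun u hu => by fin_cases u <;> simp_all⟩
    · obtain ⟨i, ha, hb, hc⟩ := source_of_pairs F hF 3 0 1 2 (by decide) (by decide) (by decide)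
      exact ⟨i, fun u hu => by fin_cases u <;> simp_all⟩
  choose g hg using key
  obtain ⟨u, v, huv, hguv⟩ := Fintype.exists_ne_map_eq_of_card_lt g (by simp)
  have h1 : F (g u) u v := hg u v (Ne.symm huv)
  have h2 : F (g u) v u := hguv ▸ hg v u huv
  exact ((hF.1 (g u) u v (by simpa using huv)).mp h1) h2

lemma no_small_cover (k : ℕ) (hk : k < 3) :
    ¬ ∃ F : Fin k → (Fin 4 → Fin 4 → Prop),
      IsOrientationCover (⊤ : SimpleGraph (Fin 4)) F := by
  rintro ⟨F, hF⟩
  apply no_two_cover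
  rcases Nat.eq_zero_or_pos k with h0 | h0
  · subst h0
    obtain ⟨i, -⟩ := hF.2 0 1 1 (by decide) (by decide)
    exact absurd i.2 (Nat.not_lt_zero _)
  · refine ⟨fun j => F ⟨min j.val (k-1), by omega⟩, fun j => hF.1 _, fun v u w hvu hvw => ?_⟩
    obtain ⟨i, hi⟩ := hF.2 v u w hvu hvw
    have hik := i.2
    refine ⟨⟨i.val, by omega⟩, ?_⟩
    have he : (⟨min i.val (k-1), by omega⟩ : Fin k) = i := Fin.ext (by simp; omega)
    simpa [he] using hi

/-- `σ(K_4) = 3`: there is an orientation covering of `K_4` of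
size 3, and none of size 2. -/
theorem stmt17 :
    orientCoverNum (⊤ : SimpleGraph (Fin 4)) = 3 ∧
    (∃ F : Fin 3 → (Fin 4 → Fin 4 → Prop),
      IsOrientationCover (⊤ : SimpleGraph (Fin 4)) F) ∧
    ¬ ∃ F : Fin 2 → (Fin 4 → Fin 4 → Prop),
      IsOrientationCover (⊤ : SimpleGraph (Fin 4)) F := by
  have h3 : 3 ∈ {k | ∃ F : Fin k → (Fin 4 → Fin 4 → Prop),
      IsOrientationCover (⊤ : SimpleGraph (Fin 4)) F} := ⟨myOr, myOr_cover⟩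
  refine ⟨le_antisymm (Nat.sInf_le h3) ?_, ⟨myOr, myOr_cover⟩, no_two_cover⟩
  refine le_csInf ⟨3, h3⟩ (fun k hk => ?_)
  by_contra h
  exact no_small_cover k (by omega) hk
end
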